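/- arXiv:1507.07038 — 2 statements merged into one kernel-verified Lean document; each statement's English description precedes it below -/
import Mathlib

section
/- For any two distinct strings x, y over Σ and any letters λ, μ ∈ Σ with λ ≤ μ: if x ≺ y in V-order, then xλ ≺ yμ (where xλ and yμ denote the strings obtained by appending λ to x and μ to y respectively). -/
variable {α : Type*} [LinearOrder α]

/-- The star operation on strings: delete the letter `x_h`, where `h` is the
start of the longest non-decreasing suffix (so `h = 1` iff the whole string is
non-decreasing, and otherwise `x_{h-1} > x_h ≤ x_{h+1} ≤ ⋯ ≤ x_n`). -/
def vstar : List α → List α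
  | [] => []
  | a :: t => if List.IsChain (· ≤ ·) (a :: t) then t else a :: vstar t

/-- V-order `≺` between distinct strings `x`, `y`: either `x` lies on the path
`y, y*, y^{2*}, …, ε`, or (if neither lies on the path of the other) taking the
least `s, t` with `x^{(s+1)*} = y^{(t+1)*}` and the greatest position `j` at
which `s = x^{s*}` and `t = y^{t*}` differ, the letter of `x^{s*}` at `j` is
smaller than that of `y^{t*}`. -/
def VLess (x y : List α) : Prop :=
  (∃ k : ℕ, 0 < k ∧ vstar^[k] y = x) ∨
  ((¬ ∃ k : ℕ, vstar^[k] y = x) ∧ (¬ ∃ k : ℕ, vstar^[k] x = y) ∧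
    ∃ s t : ℕ,
      vstar^[s + 1] x = vstar^[t + 1] y ∧
      (∀ s' t' : ℕ, vstar^[s' + 1] x = vstar^[t' + 1] y → s ≤ s' ∧ t ≤ t') ∧
      ∃ j : ℕ, j < (vstar^[s] x).length ∧
        (∀ j' : ℕ, j < j' → (vstar^[s] x)[j']? = (vstar^[t] y)[j']?) ∧
        ∃ a b : α, (vstar^[s] x)[j]? = some a ∧ (vstar^[t] y)[j]? = some b ∧
          a < b)

section VOrderProof

theorem vstar_nil : vstar ([] : List α) = [] := rfl

theorem vstar_cons (a : α) (t : List α) :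
    vstar (a :: t) = if List.IsChain (· ≤ ·) (a :: t) then t else a :: vstar t := rfl

theorem vstar_singleton (a : α) : vstar [a] = [] := by
  rw [vstar_cons, if_pos (List.isChain_singleton a)]

theorem getLast?_cons_ne {t : List α} (ht : t ≠ []) (d : α) :
    (d :: t).getLast? = t.getLast? := by
  obtain ⟨b, t', rfl⟩ := List.exists_cons_of_ne_nil ht
  exact List.getLast?_cons_cons

theorem getLast?_some_of_ne_nil {t : List α} (ht : t ≠ []) : ∃ c, t.getLast? = some c :=
  Option.isSome_iff_exists.1 (List.getLast?_isSome.2 ht)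

theorem vstar_length (x : List α) : (vstar x).length = x.length - 1 := by
  induction x with
  | nil => rfl
  | cons a t ih =>
    rw [vstar_cons]
    split_ifs with h
    · simp
    · have ht : t ≠ [] := by rintro rfl; exact h (List.isChain_singleton a)
      simp only [List.length_cons]
      rw [ih]
      have := List.length_pos_iff.2 ht
      omega

theorem vstar_append_le {v : List α} {c a : α} (h : v.getLast? = some c) (hca : c ≤ a) :
    vstar (v ++ [a]) = vstar v ++ [a] := by
  induction v with
  | nil => simp at h
  | cons d t ih =>
    rcases eq_or_ne t [] with rfl | ht
    · simp only [List.getLast?_singleton, Option.some_inj] at h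
      subst h
      rw [List.singleton_append, vstar_cons, if_pos (List.isChain_pair.2 hca),
        vstar_singleton]
      simp
    · have hlast : t.getLast? = some c := by rwa [getLast?_cons_ne ht] at h
      rw [List.cons_append, vstar_cons, vstar_cons]
      by_cases hch : List.IsChain (· ≤ ·) (d :: t)
      · rw [if_pos hch, if_pos]
        rw [show d :: (t ++ [a]) = (d :: t) ++ [a] by rfl, List.isChain_append]
        refine ⟨hch, List.isChain_singleton a, ?_⟩
        intro x hx y hy
        simp only [List.head?_cons, Option.mem_def, Option.some_inj] at hy
        rw [getLast?_cons_ne ht, hlast] at hx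
        simp only [Option.mem_def, Option.some_inj] at hx
        subst hx; subst hy; exact hca
      · rw [if_neg hch, if_neg, ih hlast]
        · simp
        · intro hch2
          rw [show d :: (t ++ [a]) = (d :: t) ++ [a] by rfl] at hch2
          exact hch (hch2.prefix ⟨[a], rfl⟩)

theorem vstar_append_gt {v : List α} {c a : α} (h : v.getLast? = some c) (hca : a < c) :
    vstar (v ++ [a]) = v := by
  induction v with
  | nil => simp at h
  | cons d t ih =>
    rcases eq_or_ne t [] with rfl | ht
    · simp only [List.getLast?_singleton, Option.some_inj] at h
      subst h
      rw [List.singleton_append, vstar_cons, if_neg, vstar_singleton]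
      rw [List.isChain_pair]; exact not_le.2 hca
    · have hlast : t.getLast? = some c := by rwa [getLast?_cons_ne ht] at h
      rw [List.cons_append, vstar_cons, if_neg, ih hlast]
      intro hch
      rw [show d :: (t ++ [a]) = (d :: t) ++ [a] by rfl, List.isChain_append] at hch
      obtain ⟨-, -, hrel⟩ := hch
      have := hrel c (by rw [getLast?_cons_ne ht]; exact hlast) a (by simp)
      exact absurd this (not_le.2 hca)

theorem vstar_last_mono {v : List α} {c c' : α} (h : v.getLast? = some c)
    (h' : (vstar v).getLast? = some c') : c ≤ c' := by
  induction v with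
  | nil => simp at h
  | cons d t ih =>
    rcases eq_or_ne t [] with rfl | ht
    · rw [vstar_singleton] at h'; simp at h'
    · have hlast : t.getLast? = some c := by rwa [getLast?_cons_ne ht] at h
      rw [vstar_cons] at h'
      split_ifs at h' with hch
      · rw [hlast] at h'
        exact le_of_eq (Option.some_inj.1 h')
      · rcases eq_or_ne (vstar t) [] with hvt | hvt
        · rw [hvt] at h'
          simp only [List.getLast?_singleton, Option.some_inj] at h'
          subst h'
          have ht1 : t.length = 1 := by
            have h2 := vstar_length t
            rw [hvt] at h2
            have h3 := List.length_pos_iff.2 ht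
            simp at h2
            omega
          obtain ⟨e, rfl⟩ := List.length_eq_one_iff.1 ht1
          simp only [List.getLast?_singleton, Option.some_inj] at hlast
          subst hlast
          by_contra hcc
          exact hch (List.isChain_pair.2 (le_of_not_ge hcc))
        · rw [getLast?_cons_ne hvt] at h'
          exact ih hlast h'

theorem chain'_forall₂ {v : List α} {c : α} (hch : List.IsChain (· ≤ ·) v)
    (h : v.getLast? = some c) {b : α} (hcb : c ≤ b) :
    List.Forall₂ (· ≤ ·) v (v.tail ++ [b]) := by
  induction v with
  | nil => simp at h
  | cons d t ih =>
    rcases eq_or_ne t [] with rfl | ht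
    · simp only [List.getLast?_singleton, Option.some_inj] at h
      subst h
      exact List.forall₂_cons.2 ⟨hcb, List.Forall₂.nil⟩
    · have hlast : t.getLast? = some c := by rwa [getLast?_cons_ne ht] at h
      obtain ⟨e, t', rfl⟩ := List.exists_cons_of_ne_nil ht
      have hch' : List.IsChain (· ≤ ·) (e :: t') := hch.tail
      have hde : d ≤ e := (List.isChain_cons_cons.1 hch).1
      simp only [List.tail_cons]
      refine List.forall₂_cons.2 ⟨hde, ?_⟩
      have := ih hch' hlast
      simpa using this

theorem vstar_pointwise {v w : List α} {c : α} (hv : vstar v = w) (h : v.getLast? = some c)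
    {b : α} (hcb : c ≤ b) : List.Forall₂ (· ≤ ·) v (w ++ [b]) := by
  induction v generalizing w with
  | nil => simp at h
  | cons d t ih =>
    rw [vstar_cons] at hv
    split_ifs at hv with hch
    · subst hv
      exact chain'_forall₂ hch h hcb
    · have ht : t ≠ [] := by rintro rfl; exact hch (List.isChain_singleton d)
      have hlast : t.getLast? = some c := by rwa [getLast?_cons_ne ht] at h
      subst hv
      exact List.forall₂_cons.2 ⟨le_refl d, ih rfl hlast⟩
def F (x : List α) (ℓ : ℕ) : List α := vstar^[x.length - ℓ] x

theorem it_length (k : ℕ) (x : List α) : (vstar^[k] x).length = x.length - k := by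
  induction k with
  | zero => rfl
  | succ k ih =>
    rw [Function.iterate_succ_apply', vstar_length, ih]
    omega

theorem F_length {x : List α} {ℓ : ℕ} (h : ℓ ≤ x.length) : (F x ℓ).length = ℓ := by
  rw [F, it_length]; omega

theorem F_top (x : List α) : F x x.length = x := by
  rw [F, Nat.sub_self]; rfl

theorem F_zero (x : List α) : F x 0 = [] :=
  List.length_eq_zero_iff.1 (by rw [F_length (Nat.zero_le _)])

theorem F_ne_nil {x : List α} {ℓ : ℕ} (h1 : 1 ≤ ℓ) (h : ℓ ≤ x.length) : F x ℓ ≠ [] := by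
  intro hn
  have := F_length h
  rw [hn] at this
  simp at this
  omega

theorem F_step {x : List α} {ℓ : ℕ} (h : ℓ + 1 ≤ x.length) : vstar (F x (ℓ + 1)) = F x ℓ := by
  rw [F, F, show x.length - ℓ = (x.length - (ℓ+1)) + 1 by omega,
    Function.iterate_succ_apply']

theorem F_iter {x : List α} {ℓ ℓ' : ℕ} (h' : ℓ' ≤ ℓ) (h : ℓ ≤ x.length) :
    vstar^[ℓ - ℓ'] (F x ℓ) = F x ℓ' := by
  rw [F, F, ← Function.iterate_add_apply]
  congr 1
  omega

theorem F_down {x y : List α} {ℓ ℓ' : ℕ} (h' : ℓ' ≤ ℓ) (hx : ℓ ≤ x.length)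
    (hy : ℓ ≤ y.length) (h : F x ℓ = F y ℓ) : F x ℓ' = F y ℓ' := by
  rw [← F_iter h' hx, ← F_iter h' hy, h]

theorem it_eq_F {x : List α} {k : ℕ} (h : k ≤ x.length) : vstar^[k] x = F x (x.length - k) := by
  rw [F]
  congr 1
  omega

theorem it_ge {x : List α} {k : ℕ} (h : x.length ≤ k) : vstar^[k] x = [] :=
  List.length_eq_zero_iff.1 (by rw [it_length]; omega)

/-- The "last difference" comparison used in `VLess`. -/
def LD (u v : List α) : Prop :=
  ∃ j, j < u.length ∧ (∀ j' : ℕ, j < j' → u[j']? = v[j']?) ∧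
    ∃ a b : α, u[j]? = some a ∧ v[j]? = some b ∧ a < b

theorem LD_ne {u v : List α} (h : LD u v) : u ≠ v := by
  obtain ⟨j, -, -, a, b, ha, hb, hab⟩ := h
  intro he
  rw [he, hb] at ha
  exact absurd (Option.some_inj.1 ha) (ne_of_gt hab)

theorem LD_asymm {u v : List α} (h : LD u v) (h' : LD v u) : False := by
  obtain ⟨j, hj, hup, a, b, ha, hb, hab⟩ := h
  obtain ⟨j', hj', hup', a', b', ha', hb', hab'⟩ := h'
  rcases lt_trichotomy j j' with hlt | rfl | hlt
  · have he := hup j' hlt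
    rw [hb', ha'] at he
    exact lt_irrefl _ (lt_of_lt_of_le hab' (le_of_eq (Option.some_inj.1 he)))
  · have h1 : b = a' := by rw [hb] at ha'; exact Option.some_inj.1 ha'
    have h2 : a = b' := by rw [ha] at hb'; exact Option.some_inj.1 hb'
    subst h1; subst h2
    exact lt_irrefl _ (hab.trans hab')
  · have he := hup' j hlt
    rw [hb, ha] at he
    exact lt_irrefl _ (lt_of_lt_of_le hab (le_of_eq (Option.some_inj.1 he)))

theorem LD_top {u v : List α} {c d : α} (hlen : u.length = v.length)
    (hc : u.getLast? = some c) (hd : v.getLast? = some d) (hcd : c < d) : LD u v := by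
  have hu : u ≠ [] := by rintro rfl; simp at hc
  have hpos : 0 < u.length := List.length_pos_iff.2 hu
  refine ⟨u.length - 1, by omega, ?_, c, d, ?_, ?_, hcd⟩
  · intro j' hj'
    rw [List.getElem?_eq_none (by omega), List.getElem?_eq_none (by omega)]
  · rw [← List.getLast?_eq_getElem?]; exact hc
  · rw [show u.length - 1 = v.length - 1 by omega, ← List.getLast?_eq_getElem?]; exact hd

theorem getElem?_concat_len (l : List α) (e : α) : (l ++ [e])[l.length]? = some e := by
  rw [List.getElem?_append_right (le_refl _)]
  simp

theorem LD_append {u v : List α} {e : α} (hlen : u.length = v.length) (h : LD u v) :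
    LD (u ++ [e]) (v ++ [e]) := by
  obtain ⟨j, hj, hup, a, b, ha, hb, hab⟩ := h
  refine ⟨j, by simp; omega, ?_, a, b, ?_, ?_, hab⟩
  · intro j' hj'
    rcases lt_trichotomy j' u.length with hlt | heq | hgt
    · rw [List.getElem?_append_left hlt, List.getElem?_append_left (by omega : j' < v.length)]
      exact hup j' hj'
    · rw [heq, getElem?_concat_len, hlen, getElem?_concat_len]
    · rw [List.getElem?_eq_none
        (by simp only [List.length_append, List.length_singleton]; omega),
        List.getElem?_eq_none
        (by simp only [List.length_append, List.length_singleton]; omega)]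
  · rw [List.getElem?_append_left hj]; exact ha
  · rw [List.getElem?_append_left (hlen ▸ hj)]; exact hb

theorem LD_of_forall₂ {u v : List α} (h : List.Forall₂ (· ≤ ·) u v) (hne : u ≠ v) :
    LD u v := by
  classical
  have hlen := h.length_eq
  have hex : ∃ i : ℕ, u[i]? ≠ v[i]? := by
    by_contra hc
    push_neg at hc
    exact hne (List.ext_getElem? fun i => hc i)
  obtain ⟨i, hi⟩ := hex
  have hilt : i < u.length := by
    by_contra hc
    push_neg at hc
    rw [List.getElem?_eq_none hc, List.getElem?_eq_none (hlen ▸ hc)] at hi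
    exact hi rfl
  set P : ℕ → Prop := fun j => u[j]? ≠ v[j]? with hP
  set J := Nat.findGreatest P u.length with hJ
  have hPJ : P J := Nat.findGreatest_spec (le_of_lt hilt) hi
  have hJle : J ≤ u.length := Nat.findGreatest_le _
  have hJlt : J < u.length := by
    rcases eq_or_lt_of_le hJle with he | h'
    · exfalso
      apply hPJ
      rw [he, List.getElem?_eq_none (le_refl _), List.getElem?_eq_none (hlen ▸ le_refl _)]
    · exact h'
  refine ⟨J, hJlt, ?_, u[J], v[J], List.getElem?_eq_getElem hJlt,
    List.getElem?_eq_getElem (hlen ▸ hJlt), ?_⟩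
  · intro j' hj'
    by_cases hle : j' ≤ u.length
    · by_contra hne'
      exact (Nat.findGreatest_is_greatest hj' hle) hne'
    · push_neg at hle
      rw [List.getElem?_eq_none (by omega), List.getElem?_eq_none (by omega)]
  · have hle : u[J] ≤ v[J] := by
      have := h.get (i := J) hJlt (hlen ▸ hJlt)
      simpa using this
    rcases eq_or_lt_of_le hle with he | h'
    · exfalso
      apply hPJ
      rw [List.getElem?_eq_getElem hJlt, List.getElem?_eq_getElem (hlen ▸ hJlt), he]
    · exact h'

/-- An append-at-the-end child `w ++ [b]` is `LD`-above any child `v` of `w`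
whose last letter is `≤ b`. -/
theorem LD_min {v w : List α} {c b : α} (hv : vstar v = w) (hc : v.getLast? = some c)
    (hcb : c ≤ b) (hne : v ≠ w ++ [b]) : LD v (w ++ [b]) :=
  LD_of_forall₂ (vstar_pointwise hv hc hcb) hne
theorem it_nil (k : ℕ) : vstar^[k] ([] : List α) = [] :=
  it_ge (by simp)

theorem vless_intro_anc {x y : List α} (hlt : x.length < y.length) (h : F y x.length = x) :
    VLess x y := by
  left
  refine ⟨y.length - x.length, by omega, ?_⟩
  rw [it_eq_F (by omega), show y.length - (y.length - x.length) = x.length by omega]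
  exact h

theorem vless_intro_br {x y : List α} {L : ℕ} (hx : L + 1 ≤ x.length) (hy : L + 1 ≤ y.length)
    (hag : F x L = F y L) (hne : F x (L + 1) ≠ F y (L + 1))
    (hld : LD (F x (L + 1)) (F y (L + 1))) : VLess x y := by
  have key : ∀ jj, L + 1 ≤ jj → jj ≤ x.length → jj ≤ y.length → F x jj ≠ F y jj := by
    intro jj h1 h2 h3 he
    exact hne (F_down h1 h2 h3 he)
  right
  refine ⟨?_, ?_, x.length - (L + 1), y.length - (L + 1), ?_, ?_, ?_⟩
  · rintro ⟨k, hk⟩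
    have hkley : k ≤ y.length := by
      by_contra hgt
      push_neg at hgt
      rw [it_ge (le_of_lt hgt)] at hk
      have : x.length = 0 := by rw [← hk]; rfl
      omega
    have hlen : x.length = y.length - k := by rw [← hk, it_length]
    have hxF : F y x.length = x := by rw [hlen, ← it_eq_F hkley]; exact hk
    exact key x.length hx (le_refl _) (by omega) ((F_top x).trans hxF.symm)
  · rintro ⟨k, hk⟩
    have hkley : k ≤ x.length := by
      by_contra hgt
      push_neg at hgt
      rw [it_ge (le_of_lt hgt)] at hk
      have : y.length = 0 := by rw [← hk]; rfl
      omega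
    have hlen : y.length = x.length - k := by rw [← hk, it_length]
    have hyF : F x y.length = y := by rw [hlen, ← it_eq_F hkley]; exact hk
    exact key y.length hy (by omega) (le_refl _) (hyF.trans (F_top y).symm)
  · rw [show x.length - (L + 1) + 1 = x.length - L by omega,
      show y.length - (L + 1) + 1 = y.length - L by omega,
      it_eq_F (by omega : x.length - L ≤ x.length),
      it_eq_F (by omega : y.length - L ≤ y.length),
      show x.length - (x.length - L) = L by omega,
      show y.length - (y.length - L) = L by omega]
    exact hag
  · intro s' t' he
    constructor
    · by_contra hlt'
      push_neg at hlt'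
      have hs' : s' + 1 ≤ x.length - (L + 1) := hlt'
      have hzx := it_length (s' + 1) x
      have hzy := it_length (t' + 1) y
      have ht'le : t' + 1 ≤ y.length := by
        by_contra hgt
        push_neg at hgt
        rw [it_ge (le_of_lt hgt)] at he
        have h0 : x.length - (s' + 1) = 0 := by rw [← hzx, he]; rfl
        omega
      have hmy : x.length - (s' + 1) = y.length - (t' + 1) := by
        rw [← hzx, he, hzy]
      have h1 : F x (x.length - (s' + 1)) = vstar^[s' + 1] x :=
        (it_eq_F (by omega)).symm
      have h2 : F y (x.length - (s' + 1)) = vstar^[t' + 1] y := by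
        rw [hmy, ← it_eq_F ht'le]
      exact key _ (by omega) (by omega) (by omega) (h1.trans (he.trans h2.symm))
    · by_contra hlt'
      push_neg at hlt'
      have ht' : t' + 1 ≤ y.length - (L + 1) := hlt'
      have hzx := it_length (s' + 1) x
      have hzy := it_length (t' + 1) y
      have hs'le : s' + 1 ≤ x.length := by
        by_contra hgt
        push_neg at hgt
        rw [it_ge (le_of_lt hgt)] at he
        have h0 : y.length - (t' + 1) = 0 := by rw [← hzy, ← he]; rfl
        omega
      have hmx : y.length - (t' + 1) = x.length - (s' + 1) := by
        rw [← hzy, ← he, hzx]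
      have h1 : F x (y.length - (t' + 1)) = vstar^[s' + 1] x := by
        rw [hmx, ← it_eq_F hs'le]
      have h2 : F y (y.length - (t' + 1)) = vstar^[t' + 1] y :=
        (it_eq_F (by omega)).symm
      exact key _ (by omega) (by omega) (by omega) (h1.trans (he.trans h2.symm))
  · have e1 : vstar^[x.length - (L + 1)] x = F x (L + 1) := by
      rw [it_eq_F (by omega : x.length - (L + 1) ≤ x.length)]
      congr 1
      omega
    have e2 : vstar^[y.length - (L + 1)] y = F y (L + 1) := by
      rw [it_eq_F (by omega : y.length - (L + 1) ≤ y.length)]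
      congr 1
      omega
    rw [e1, e2]
    exact hld

theorem vless_elim {x y : List α} (h : VLess x y) (hne : x ≠ y) :
    (x.length < y.length ∧ F y x.length = x) ∨
    (∃ L, L + 1 ≤ x.length ∧ L + 1 ≤ y.length ∧ F x L = F y L ∧
      F x (L + 1) ≠ F y (L + 1) ∧ LD (F x (L + 1)) (F y (L + 1))) := by
  rcases h with ⟨k, hk, hky⟩ | ⟨hn1, hn2, s, t, heq, hmin, j, hj, hup, a, b, ha, hb, hab⟩
  · left
    rcases eq_or_ne x [] with rfl | hxne
    · have hyp : 0 < y.length := List.length_pos_iff.2 (fun h0 => hne (by rw [h0]))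
      refine ⟨by simpa using hyp, ?_⟩
      show F y 0 = []
      exact F_zero y
    · have hkley : k ≤ y.length := by
        by_contra hgt
        push_neg at hgt
        rw [it_ge (le_of_lt hgt)] at hky
        exact hxne hky.symm
      have hlen : x.length = y.length - k := by rw [← hky, it_length]
      have hxlenpos : 0 < x.length := List.length_pos_iff.2 hxne
      exact ⟨by omega, by rw [hlen, ← it_eq_F hkley]; exact hky⟩
  · right
    -- lengths of the compared strings
    have hsx : (vstar^[s] x).length = x.length - s := it_length _ _
    have hty : (vstar^[t] y).length = y.length - t := it_length _ _
    have hsxne : vstar^[s] x ≠ [] := by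
      intro h0
      rw [h0] at hj
      simp at hj
    have hslt : s < x.length := by
      by_contra hge
      push_neg at hge
      exact hsxne (it_ge hge)
    have htyne : vstar^[t] y ≠ [] := by
      intro h0
      rw [h0] at hb
      simp at hb
    have htlt : t < y.length := by
      by_contra hge
      push_neg at hge
      exact htyne (it_ge hge)
    set L := x.length - s - 1 with hL
    have hL1x : L + 1 = x.length - s := by omega
    -- lengths of the two children agree
    have hlen2 : x.length - (s + 1) = y.length - (t + 1) := by
      have := it_length (s + 1) x
      rw [heq, it_length] at this
      omega
    have hL1y : L + 1 = y.length - t := by omega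
    have e1 : vstar^[s] x = F x (L + 1) := by
      rw [show s = x.length - (L + 1) by omega]; rfl
    have e2 : vstar^[t] y = F y (L + 1) := by
      rw [show t = y.length - (L + 1) by omega]; rfl
    have hagree : F x L = F y L := by
      have e3 : vstar^[s + 1] x = F x L := by
        rw [show s + 1 = x.length - L by omega]; rfl
      have e4 : vstar^[t + 1] y = F y L := by
        rw [show t + 1 = y.length - L by omega]; rfl
      rw [← e3, ← e4, heq]
    refine ⟨L, by omega, by omega, hagree, ?_, ?_⟩
    · intro hcontra
      rw [← e1, ← e2] at hcontra
      rcases Nat.eq_zero_or_pos s with rfl | hs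
      · exact hn1 ⟨t, hcontra.symm⟩
      rcases Nat.eq_zero_or_pos t with rfl | ht
      · exact hn2 ⟨s, hcontra⟩
      have := hmin (s - 1) (t - 1) (by
        rw [show s - 1 + 1 = s by omega, show t - 1 + 1 = t by omega]
        exact hcontra)
      omega
    · rw [← e1, ← e2]
      exact ⟨j, hj, hup, a, b, ha, hb, hab⟩
theorem exists_Kdata (x : List α) (a : α) :
    ∃ Lx, Lx ≤ x.length ∧
      (∀ ℓ, Lx < ℓ → ℓ ≤ x.length → ∃ c, (F x ℓ).getLast? = some c ∧ c ≤ a) ∧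
      (1 ≤ Lx → ∃ c, (F x Lx).getLast? = some c ∧ a < c) ∧
      (∀ ℓ, ℓ ≤ Lx → F (x ++ [a]) ℓ = F x ℓ) ∧
      (∀ L, Lx ≤ L → L ≤ x.length → F (x ++ [a]) (L + 1) = F x L ++ [a]) := by
  classical
  set P : ℕ → Prop :=
    fun k => vstar^[k] x = [] ∨ ∃ c, (vstar^[k] x).getLast? = some c ∧ a < c with hP
  have hex : ∃ k, P k := ⟨x.length, Or.inl (it_ge (le_refl _))⟩
  have hKspec : P (Nat.find hex) := Nat.find_spec hex
  have hKmin : ∀ k, k < Nat.find hex → ¬ P k := fun k hk => Nat.find_min hex hk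
  have hKle : Nat.find hex ≤ x.length := Nat.find_le (Or.inl (it_ge (le_refl _)))
  set K := Nat.find hex with hK
  have AP1 : ∀ k, k ≤ K → vstar^[k] (x ++ [a]) = vstar^[k] x ++ [a] := by
    intro k
    induction k with
    | zero => intro _; rfl
    | succ k ih =>
      intro hk
      have hnp := hKmin k (by omega)
      rw [hP] at hnp
      have hne : vstar^[k] x ≠ [] := fun h => hnp (Or.inl h)
      obtain ⟨c, hc⟩ := getLast?_some_of_ne_nil hne
      have hca : c ≤ a := le_of_not_gt (fun h => hnp (Or.inr ⟨c, hc, h⟩))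
      rw [Function.iterate_succ_apply', ih (by omega),
        vstar_append_le hc hca, Function.iterate_succ_apply' vstar k x]
  have AP2 : ∀ j, vstar^[K + 1 + j] (x ++ [a]) = vstar^[K + j] x := by
    intro j
    induction j with
    | zero =>
      show vstar^[K + 1] (x ++ [a]) = vstar^[K] x
      rw [Function.iterate_succ_apply', AP1 K (le_refl _)]
      rcases hKspec with hemp | ⟨c, hc, hac⟩
      · rw [hemp]
        exact vstar_singleton a
      · exact vstar_append_gt hc hac
    | succ j ih =>
      rw [show K + 1 + (j + 1) = (K + 1 + j) + 1 by omega, Function.iterate_succ_apply', ih,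
        show K + (j + 1) = (K + j) + 1 by omega, Function.iterate_succ_apply']
  refine ⟨x.length - K, by omega, ?_, ?_, ?_, ?_⟩
  · intro ℓ hgt hle
    have hnp := hKmin (x.length - ℓ) (by omega)
    rw [hP] at hnp
    have hne : vstar^[x.length - ℓ] x ≠ [] := fun h => hnp (Or.inl h)
    obtain ⟨c, hc⟩ := getLast?_some_of_ne_nil hne
    exact ⟨c, hc, le_of_not_gt (fun h => hnp (Or.inr ⟨c, hc, h⟩))⟩
  · intro h1
    have hKeq : x.length - (x.length - K) = K := by omega
    rcases hKspec with hemp | ⟨c, hc, hac⟩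
    · exfalso
      apply F_ne_nil h1 (by omega : x.length - K ≤ x.length)
      rw [F, hKeq]
      exact hemp
    · refine ⟨c, ?_, hac⟩
      rw [F, hKeq]
      exact hc
  · intro ℓ hℓ
    show vstar^[(x ++ [a]).length - ℓ] (x ++ [a]) = vstar^[x.length - ℓ] x
    rw [List.length_append, List.length_singleton,
      show x.length + 1 - ℓ = K + 1 + (x.length - K - ℓ) by omega, AP2,
      show K + (x.length - K - ℓ) = x.length - ℓ by omega]
  · intro L hL1 hL2
    show vstar^[(x ++ [a]).length - (L + 1)] (x ++ [a]) = F x L ++ [a]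
    rw [List.length_append, List.length_singleton,
      show x.length + 1 - (L + 1) = x.length - L by omega, AP1 (x.length - L) (by omega)]
    rfl
theorem F_getLast?_some {x : List α} {ℓ : ℕ} (h1 : 1 ≤ ℓ) (h : ℓ ≤ x.length) :
    ∃ c, (F x ℓ).getLast? = some c :=
  getLast?_some_of_ne_nil (F_ne_nil h1 h)

theorem F_last_mono {x : List α} {ℓ : ℕ} {c : α} (h1 : 1 ≤ ℓ)
    (hc : (F x ℓ).getLast? = some c) :
    ∀ ℓ', ℓ ≤ ℓ' → ℓ' ≤ x.length → ∀ c', (F x ℓ').getLast? = some c' → c' ≤ c := by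
  intro ℓ' hle
  induction ℓ', hle using Nat.le_induction with
  | base =>
    intro _ c' hc'
    rw [hc] at hc'
    exact le_of_eq (Option.some_inj.1 hc').symm
  | succ m hm ih =>
    intro hn c' hc'
    obtain ⟨d, hd⟩ := F_getLast?_some (le_trans h1 hm) (by omega : m ≤ x.length)
    have h2 : (vstar (F x (m + 1))).getLast? = some d := by
      rw [F_step hn]; exact hd
    exact le_trans (vstar_last_mono hc' h2) (ih (by omega) d hd)

/-- The recurring contradiction: the branch child of `y`'s path at the branch point
cannot be `LD`-above the append-at-end child when its last letter is `≤ b`. -/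
theorem clash {y : List α} {b : α} {L0 Ly : ℕ}
    (hL0p : L0 + 1 ≤ y.length) (hLy : Ly < L0 + 1)
    (CFy : ∀ ℓ, Ly < ℓ → ℓ ≤ y.length → ∃ c, (F y ℓ).getLast? = some c ∧ c ≤ b)
    (hld : LD (F y L0 ++ [b]) (F y (L0 + 1))) : False := by
  obtain ⟨ct, hct, hctb⟩ := CFy (L0 + 1) hLy hL0p
  have hvst : vstar (F y (L0 + 1)) = F y L0 := F_step hL0p
  have hne' : F y (L0 + 1) ≠ F y L0 ++ [b] := by
    intro he
    rw [← he] at hld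
    exact LD_ne hld rfl
  exact LD_asymm hld (LD_min hvst hct hctb hne')

theorem master {x y : List α} {a b : α} (hab : a ≤ b) (hVL : VLess x y) (hne : x ≠ y)
    {L : ℕ} (hL1 : L + 1 ≤ x.length + 1) (hL2 : L + 1 ≤ y.length + 1)
    (hag : F (x ++ [a]) L = F (y ++ [b]) L)
    (hdis : F (x ++ [a]) (L + 1) ≠ F (y ++ [b]) (L + 1)) :
    LD (F (x ++ [a]) (L + 1)) (F (y ++ [b]) (L + 1)) := by
  obtain ⟨Lx, hLxn, CFx, CSx, FX2, FX1⟩ := exists_Kdata x a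
  obtain ⟨Ly, hLyp, CFy, CSy, FY2, FY1⟩ := exists_Kdata y b
  have hE := vless_elim hVL hne
  have hxL : L ≤ x.length := by omega
  have hyL : L ≤ y.length := by omega
  have hagDown : ∀ jj, jj ≤ L → F (x ++ [a]) jj = F (y ++ [b]) jj := fun jj hjj =>
    F_down hjj (by simp; omega) (by simp; omega) hag
  rcases le_or_gt (L + 1) Lx with hx1 | hx1 <;> rcases le_or_gt (L + 1) Ly with hy1 | hy1
  · -- Regime i : L+1 ≤ Lx, L+1 ≤ Ly
    have uEq : F (x ++ [a]) (L + 1) = F x (L + 1) := FX2 _ hx1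
    have vEq : F (y ++ [b]) (L + 1) = F y (L + 1) := FY2 _ hy1
    have agEq : F x L = F y L := by
      rw [← FX2 L (by omega), ← FY2 L (by omega)]; exact hag
    rw [uEq, vEq] at hdis ⊢
    rcases hE with ⟨hlt, hanc⟩ | ⟨L0, h1, h2, hag0, hdis0, hld0⟩
    · exfalso
      have hFn : F x x.length = F y x.length := (F_top x).trans hanc.symm
      exact hdis (F_down (by omega) (le_refl _) (by omega) hFn)
    · have hhigh : ∀ jj, jj ≤ x.length → jj ≤ y.length → F x jj = F y jj → jj ≤ L0 := by
        intro jj hjx hjy hje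
        by_contra hgt
        push_neg at hgt
        exact hdis0 (F_down (by omega) hjx hjy hje)
      have hLle : L ≤ L0 := hhigh L hxL hyL agEq
      have hL0L : L0 = L := by
        by_contra hll
        have : L + 1 ≤ L0 := by omega
        exact hdis (F_down this (by omega) (by omega) hag0)
      rw [hL0L] at hld0
      exact hld0
  · -- Regime iii : L+1 ≤ Lx, Ly < L+1
    have uEq : F (x ++ [a]) (L + 1) = F x (L + 1) := FX2 _ hx1
    have vEq : F (y ++ [b]) (L + 1) = F y L ++ [b] := FY1 L (by omega) hyL
    rw [uEq, vEq] at hdis ⊢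
    -- first, establish w-agreement : F x L = F y L, and last (F x (L+1)) ≤ b
    have hxL1 : L + 1 ≤ x.length := by omega
    have hFxL' : F (x ++ [a]) L = F x L := FX2 L (by omega)
    have hhigh : (x.length < y.length ∧ F y x.length = x) ∨ True := Or.inr trivial
    -- split bnd / int
    have key : F x L = F y L ∧ ∃ cu, (F x (L + 1)).getLast? = some cu ∧ cu ≤ b := by
      rcases eq_or_lt_of_le (by omega : Ly ≤ L) with hbnd | hint
      · -- bnd : Ly = L
        have hFyL' : F (y ++ [b]) L = F y L := FY2 L (by omega)
        have hwEq : F x L = F y L := by rw [← hFxL', ← hFyL']; exact hag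
        refine ⟨hwEq, ?_⟩
        obtain ⟨cu, hcu⟩ := F_getLast?_some (by omega) hxL1
        refine ⟨cu, hcu, ?_⟩
        rcases hE with ⟨hlt, hanc⟩ | ⟨L0, h1, h2, hag0, hdis0, hld0⟩
        · -- ancestor: x lies on y's path; then F y (L+1) = F x (L+1) and Cont gives bound
          have hFn : F x x.length = F y x.length := (F_top x).trans hanc.symm
          have hagL1 : F x (L + 1) = F y (L + 1) :=
            F_down (by omega) (le_refl _) (by omega) hFn
          obtain ⟨c, hc, hcb⟩ := CFy (L + 1) (by omega) (by omega)
          rw [← hagL1, hcu] at hc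
          exact (Option.some_inj.1 hc) ▸ hcb
        · have hhigh : ∀ jj, jj ≤ x.length → jj ≤ y.length → F x jj = F y jj → jj ≤ L0 := by
            intro jj hjx hjy hje
            by_contra hgt
            push_neg at hgt
            exact hdis0 (F_down (by omega) hjx hjy hje)
          have hLle : L ≤ L0 := hhigh L hxL (by omega) hwEq
          rcases eq_or_lt_of_le hLle with hL0L | hL0L
          · -- L0 = L : branch of x,y exactly here
            rw [← hL0L] at hld0
            obtain ⟨ct, hct, hctb⟩ := CFy (L + 1) (by omega) (by omega)
            by_contra hgtb
            push_neg at hgtb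
            have hctcu : ct < cu := lt_of_le_of_lt hctb hgtb
            have hld1 : LD (F y (L + 1)) (F x (L + 1)) := by
              refine LD_top ?_ hct hcu hctcu
              rw [F_length (by omega), F_length (by omega)]
            exact LD_asymm hld0 hld1
          · -- L+1 ≤ L0 : paths agree at L+1
            have hagL1 : F x (L + 1) = F y (L + 1) :=
              F_down (by omega) (by omega) (by omega) hag0
            obtain ⟨c, hc, hcb⟩ := CFy (L + 1) (by omega) (by omega)
            rw [← hagL1, hcu] at hc
            exact (Option.some_inj.1 hc) ▸ hcb
      · -- int : Ly < L
        have hL1' : 1 ≤ L := by omega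
        obtain ⟨L', rfl⟩ : ∃ L', L = L' + 1 := ⟨L - 1, by omega⟩
        have hFyL' : F (y ++ [b]) (L' + 1) = F y L' ++ [b] := FY1 L' (by omega) (by omega)
        have hagL : F x (L' + 1) = F y L' ++ [b] := by
          rw [← hFxL', ← hFyL']; exact hag
        have hγ : (F x (L' + 1)).getLast? = some b := by
          rw [hagL]; exact List.getLast?_concat
        have hwEq : F x (L' + 1) = F y (L' + 1) := by
          rcases hE with ⟨hlt, hanc⟩ | ⟨L0, h1, h2, hag0, hdis0, hld0⟩
          · have hFn : F x x.length = F y x.length := (F_top x).trans hanc.symm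
            exact F_down (by omega) (le_refl _) (by omega) hFn
          · have hhigh : ∀ jj, jj ≤ x.length → jj ≤ y.length → F x jj = F y jj → jj ≤ L0 := by
              intro jj hjx hjy hje
              by_contra hgt
              push_neg at hgt
              exact hdis0 (F_down (by omega) hjx hjy hje)
            by_cases hLL0 : L' + 1 ≤ L0
            · exact F_down hLL0 (by omega) (by omega) hag0
            · exfalso
              push_neg at hLL0
              have hLy0 : Ly ≤ L0 := by
                have hagLy : F x Ly = F y Ly := by
                  have h3 := hagDown Ly (by omega)
                  rwa [FX2 Ly (by omega), FY2 Ly (le_refl _)] at h3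
                exact hhigh Ly (by omega) (by omega) hagLy
              have hseq : F x (L0 + 1) = F y L0 ++ [b] := by
                have h3 := hagDown (L0 + 1) (by omega)
                rwa [FX2 (L0 + 1) (by omega), FY1 L0 (by omega) (by omega)] at h3
              rw [hseq] at hld0
              exact clash h2 (by omega) CFy hld0
        refine ⟨hwEq, ?_⟩
        obtain ⟨cu, hcu⟩ := F_getLast?_some (by omega) hxL1
        refine ⟨cu, hcu, ?_⟩
        have h2' : (vstar (F x (L' + 1 + 1))).getLast? = some b := by
          rw [F_step hxL1]; exact hγ
        exact vstar_last_mono hcu h2'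
    obtain ⟨hwEq, cu, hcu, hcub⟩ := key
    have hvst : vstar (F x (L + 1)) = F y L := by
      rw [F_step hxL1]; exact hwEq
    exact LD_min hvst hcu hcub hdis
  · -- Regime ii : Lx < L+1, L+1 ≤ Ly
    have uEq : F (x ++ [a]) (L + 1) = F x L ++ [a] := FX1 L (by omega) hxL
    have vEq : F (y ++ [b]) (L + 1) = F y (L + 1) := FY2 _ hy1
    rw [uEq, vEq] at hdis ⊢
    have hLy1 : 1 ≤ Ly := by omega
    obtain ⟨cy, hcy, hbcy⟩ := CSy hLy1
    rcases le_or_gt L Lx with hbnd | hint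
    · -- bnd : L = Lx ; compare top letters a < last (F y (L+1))
      obtain ⟨cv, hcv⟩ := F_getLast?_some (by omega) (by omega : L + 1 ≤ y.length)
      have hcycv : cy ≤ cv := F_last_mono (by omega) hcv Ly hy1 hLyp cy hcy
      refine LD_top ?_ (List.getLast?_concat) hcv ?_
      · rw [List.length_append, List.length_singleton, F_length hxL, F_length (by omega)]
      · exact lt_of_le_of_lt hab (lt_of_lt_of_le hbcy hcycv)
    · -- int : Lx < L : impossible
      exfalso
      obtain ⟨L', rfl⟩ : ∃ L', L = L' + 1 := ⟨L - 1, by omega⟩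
      have hagL : F y (L' + 1) = F x L' ++ [a] := by
        have h3 := hagDown (L' + 1) (le_refl _)
        rw [FX1 L' (by omega) (by omega), FY2 (L' + 1) (by omega)] at h3
        exact h3.symm
      have hlastv : (F y (L' + 1)).getLast? = some a := by
        rw [hagL]; exact List.getLast?_concat
      have : cy ≤ a := F_last_mono (by omega) hlastv Ly (by omega) hLyp cy hcy
      exact absurd (lt_of_le_of_lt hab hbcy) (not_lt.2 this)
  · -- Regime iv : Lx < L+1, Ly < L+1
    have uEq : F (x ++ [a]) (L + 1) = F x L ++ [a] := FX1 L (by omega) hxL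
    have vEq : F (y ++ [b]) (L + 1) = F y L ++ [b] := FY1 L (by omega) hyL
    rw [uEq, vEq] at hdis ⊢
    rcases le_or_gt L Lx with hbx | hbx <;> rcases le_or_gt L Ly with hby | hby
    · -- both bnd : L = Lx = Ly
      have hagEq : F x L = F y L := by
        have h3 := hag
        rwa [FX2 L hbx, FY2 L hby] at h3
      have hne' : a ≠ b := by
        intro he
        exact hdis (by rw [hagEq, he])
      refine LD_top ?_ (List.getLast?_concat) (List.getLast?_concat)
        (lt_of_le_of_ne hab hne')
      simp [F_length hxL, F_length hyL]
    · -- xbnd : L = Lx, Ly < L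
      obtain ⟨L', rfl⟩ : ∃ L', L = L' + 1 := ⟨L - 1, by omega⟩
      have hagL : F x (L' + 1) = F y L' ++ [b] := by
        have h3 := hag
        rwa [FX2 (L' + 1) hbx, FY1 L' (by omega) (by omega)] at h3
      have hlastu : (F x (L' + 1)).getLast? = some b := by
        rw [hagL]; exact List.getLast?_concat
      have hLx1 : 1 ≤ Lx := by omega
      obtain ⟨cx, hcx, hacx⟩ := CSx hLx1
      have hLxeq : Lx = L' + 1 := by omega
      rw [hLxeq, hlastu] at hcx
      have hax : a < b := lt_of_lt_of_le hacx (le_of_eq (Option.some_inj.1 hcx).symm)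
      refine LD_top ?_ (List.getLast?_concat) (List.getLast?_concat) hax
      simp [F_length hxL, F_length hyL]
    · -- ybnd : L = Ly, Lx < L : impossible
      exfalso
      obtain ⟨L', rfl⟩ : ∃ L', L = L' + 1 := ⟨L - 1, by omega⟩
      have hagL : F y (L' + 1) = F x L' ++ [a] := by
        have h3 := hag
        rw [FX1 L' (by omega) (by omega), FY2 (L' + 1) hby] at h3
        exact h3.symm
      have hlastv : (F y (L' + 1)).getLast? = some a := by
        rw [hagL]; exact List.getLast?_concat
      have hLy1 : 1 ≤ Ly := by omega
      obtain ⟨cy, hcy, hbcy⟩ := CSy hLy1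
      have hLyeq : Ly = L' + 1 := by omega
      rw [hLyeq, hlastv] at hcy
      have hba : b < a := lt_of_lt_of_le hbcy (le_of_eq (Option.some_inj.1 hcy).symm)
      exact absurd (lt_of_le_of_lt hab hba) (lt_irrefl a)
    · -- int : Lx < L, Ly < L
      obtain ⟨L', rfl⟩ : ∃ L', L = L' + 1 := ⟨L - 1, by omega⟩
      have hagL : F x L' ++ [a] = F y L' ++ [b] := by
        have h3 := hag
        rwa [FX1 L' (by omega) (by omega), FY1 L' (by omega) (by omega)] at h3
      have hinj := List.append_inj hagL (by rw [F_length (by omega), F_length (by omega)])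
      obtain ⟨hpre, hab'⟩ := hinj
      have hab'' : a = b := by simpa using hab'
      subst hab''
      have hdis' : F x (L' + 1) ≠ F y (L' + 1) := by
        intro he
        exact hdis (by rw [he])
      rcases hE with ⟨hlt, hanc⟩ | ⟨L0, h1, h2, hag0, hdis0, hld0⟩
      · exfalso
        have hFn : F x x.length = F y x.length := (F_top x).trans hanc.symm
        exact hdis' (F_down (by omega) (le_refl _) (by omega) hFn)
      · have hhigh : ∀ jj, jj ≤ x.length → jj ≤ y.length → F x jj = F y jj → jj ≤ L0 := by
          intro jj hjx hjy hje
          by_contra hgt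
          push_neg at hgt
          exact hdis0 (F_down (by omega) hjx hjy hje)
        have hL'le : L' ≤ L0 := hhigh L' (by omega) (by omega) hpre
        have hL0eq : L0 = L' := by
          by_contra hll
          have : L' + 1 ≤ L0 := by omega
          exact hdis' (F_down this (by omega) (by omega) hag0)
        rw [hL0eq] at hld0
        exact LD_append (by rw [F_length (by omega), F_length (by omega)]) hld0
theorem ycontra {x y : List α} {a b : α} (hVL : VLess x y) (hne : x ≠ y)
    (hplt : y.length < x.length)
    (hag : F (x ++ [a]) (y.length + 1) = F (y ++ [b]) (y.length + 1)) : False := by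
  obtain ⟨Lx, hLxn, CFx, CSx, FX2, FX1⟩ := exists_Kdata x a
  obtain ⟨Ly, hLyp, CFy, CSy, FY2, FY1⟩ := exists_Kdata y b
  have hE := vless_elim hVL hne
  have hagDown : ∀ jj, jj ≤ y.length + 1 → F (x ++ [a]) jj = F (y ++ [b]) jj := fun jj hjj =>
    F_down hjj (by simp only [List.length_append, List.length_singleton]; omega)
      (by simp only [List.length_append, List.length_singleton]; omega) hag
  have vEq : F (y ++ [b]) (y.length + 1) = y ++ [b] := by
    rw [FY1 y.length hLyp (le_refl _), F_top]
  rcases le_or_gt (y.length + 1) Lx with hc1 | hc1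
  · rcases hE with ⟨hlt, hanc⟩ | ⟨L0, h1, h2, hag0, hdis0, hld0⟩
    · omega
    · have hhigh : ∀ jj, jj ≤ x.length → jj ≤ y.length → F x jj = F y jj → jj ≤ L0 := by
        intro jj hjx hjy hje
        by_contra hgt
        push_neg at hgt
        exact hdis0 (F_down (by omega) hjx hjy hje)
      have hLy0 : Ly ≤ L0 := by
        have hagLy : F x Ly = F y Ly := by
          have h3 := hagDown Ly (by omega)
          rwa [FX2 Ly (by omega), FY2 Ly (le_refl _)] at h3
        exact hhigh Ly (by omega) hLyp hagLy
      have hseq : F x (L0 + 1) = F y L0 ++ [b] := by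
        have h3 := hagDown (L0 + 1) (by omega)
        rwa [FX2 (L0 + 1) (by omega), FY1 L0 hLy0 (by omega)] at h3
      rw [hseq] at hld0
      exact clash h2 (by omega) CFy hld0
  · have uEq : F (x ++ [a]) (y.length + 1) = F x y.length ++ [a] :=
      FX1 y.length (by omega) (by omega)
    rw [uEq, vEq] at hag
    obtain ⟨hpre, -⟩ := List.append_inj hag (by rw [F_length (by omega)])
    have hFp : F x y.length = F y y.length := by rw [hpre, F_top]
    rcases hE with ⟨hlt, hanc⟩ | ⟨L0, h1, h2, hag0, hdis0, hld0⟩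
    · omega
    · have hhigh : ∀ jj, jj ≤ x.length → jj ≤ y.length → F x jj = F y jj → jj ≤ L0 := by
        intro jj hjx hjy hje
        by_contra hgt
        push_neg at hgt
        exact hdis0 (F_down (by omega) hjx hjy hje)
      have := hhigh y.length (by omega) (le_refl _) hFp
      omega

theorem vless_append_mono' {x y : List α} {lam mu : α} (hxy : x ≠ y) (hlm : lam ≤ mu)
    (hVL : VLess x y) : VLess (x ++ [lam]) (y ++ [mu]) := by
  classical
  have hne' : x ++ [lam] ≠ y ++ [mu] := by
    intro he
    have hlen : x.length = y.length := by
      have := congrArg List.length he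
      simpa using this
    obtain ⟨h1, -⟩ := List.append_inj he hlen
    exact hxy h1
  obtain ⟨M, hPM, hMle, hMgr⟩ :
      ∃ M, F (x ++ [lam]) M = F (y ++ [mu]) M ∧
        M ≤ min (x.length + 1) (y.length + 1) ∧
        ∀ k, M < k → k ≤ min (x.length + 1) (y.length + 1) →
          F (x ++ [lam]) k ≠ F (y ++ [mu]) k := by
    classical
    set P : ℕ → Prop := fun ℓ => F (x ++ [lam]) ℓ = F (y ++ [mu]) ℓ with hP
    have hP0 : P 0 := by
      show F (x ++ [lam]) 0 = F (y ++ [mu]) 0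
      rw [F_zero, F_zero]
    refine ⟨Nat.findGreatest P (min (x.length + 1) (y.length + 1)),
      Nat.findGreatest_spec (Nat.zero_le _) hP0, Nat.findGreatest_le _, ?_⟩
    intro k hk hkle
    exact Nat.findGreatest_is_greatest hk hkle
  have hxplen : (x ++ [lam]).length = x.length + 1 := by simp
  have hyplen : (y ++ [mu]).length = y.length + 1 := by simp
  by_cases hMx : M = x.length + 1
  · -- x ++ [lam] lies on the path of y ++ [mu]
    have hxley : x.length + 1 ≤ y.length + 1 := by omega
    rcases eq_or_lt_of_le hxley with heq | hlt
    · exfalso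
      apply hne'
      have e1 : F (x ++ [lam]) (x.length + 1) = x ++ [lam] := by
        rw [← hxplen, F_top]
      have e2 : F (y ++ [mu]) (x.length + 1) = y ++ [mu] := by
        rw [heq, ← hyplen, F_top]
      rw [← e1, ← e2, ← hMx]
      exact hPM
    · apply vless_intro_anc
      · rw [hxplen, hyplen]; omega
      · rw [hxplen, ← hMx]
        have e1 : F (x ++ [lam]) M = x ++ [lam] := by
          rw [hMx, ← hxplen, F_top]
        rw [← hPM, e1]
  · by_cases hMy : M = y.length + 1
    · exfalso
      have hplt : y.length < x.length := by omega
      exact ycontra hVL hxy hplt (by rw [← hMy]; exact hPM)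
    · have hM1 : M + 1 ≤ min (x.length + 1) (y.length + 1) := by omega
      have hdis : F (x ++ [lam]) (M + 1) ≠ F (y ++ [mu]) (M + 1) :=
        hMgr (M + 1) (by omega) hM1
      have hld := master hlm hVL hxy (by omega : M + 1 ≤ x.length + 1)
        (by omega : M + 1 ≤ y.length + 1) hPM hdis
      exact vless_intro_br (by rw [hxplen]; omega) (by rw [hyplen]; omega) hPM hdis hld

end VOrderProof

/-- For distinct strings `x`, `y` and letters `λ ≤ μ`:
if `x ≺ y` in V-order then `xλ ≺ yμ`. -/
theorem vless_append_mono {α : Type*} [LinearOrder α]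
    (x y : List α) (lam mu : α) (hxy : x ≠ y) (hlm : lam ≤ mu) :
    VLess x y → VLess (x ++ [lam]) (y ++ [mu]) := by
  intro hVL
  exact vless_append_mono' hxy hlm hVL
end

section
/- Let x = p·u·r be a string over Σ with u a substring of x, let s₁ be a nonempty suffix of u, and let s₂ be a proper suffix of s₁. Then s₂ ≺ s₁ in V-order, and moreover s₂r ≺ s₁r in V-order (that is, the suffixes of x having s₂ and s₁ as prefixes compare in the same way: the sorting of the suffixes of u is compatible with the sorting of the suffixes of x). -/
variable {α : Type*} [LinearOrder α]

lemma vstar_chain {l : List α} (h : List.IsChain (· ≤ ·) l) : vstar l = l.tail := by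
  cases l with
  | nil => rfl
  | cons a t => simp [vstar, h]
lemma vstar_not_chain {a : α} {t : List α} (h : ¬ List.IsChain (· ≤ ·) (a :: t)) :
    vstar (a :: t) = a :: vstar t := by simp [vstar, h]
lemma vstar_chain_cons {a : α} {t : List α} (h : List.IsChain (· ≤ ·) (a :: t)) :
    vstar (a :: t) = t := by rw [vstar_chain h]; rfl
lemma length_vstar (l : List α) : (vstar l).length = l.length - 1 := by
  induction l with
  | nil => rfl
  | cons a t ih =>
    by_cases h : List.IsChain (· ≤ ·) (a :: t)
    · rw [vstar_chain_cons h]; simp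
    · have ht : t ≠ [] := by rintro rfl; exact h (by simp)
      have := List.length_pos_iff.mpr ht
      rw [vstar_not_chain h]
      simp only [List.length_cons, ih]
      omega
lemma length_vstar_iter (k : ℕ) (l : List α) : (vstar^[k] l).length = l.length - k := by
  induction k generalizing l with
  | zero => rfl
  | succ n ih =>
    rw [Function.iterate_succ_apply, ih, length_vstar]
    omega
lemma chain'_cons_not {a : α} {l : List α} (hnc : ¬ List.IsChain (· ≤ ·) (a :: l))
    (hc : List.IsChain (· ≤ ·) l) : ∃ hd, l.head? = some hd ∧ hd < a := by
  have h1 : ¬ ∀ y ∈ l.head?, a ≤ y := fun h => hnc (List.isChain_cons.mpr ⟨h, hc⟩)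
  push_neg at h1
  obtain ⟨hd, hm, hlt⟩ := h1
  exact ⟨hd, hm, hlt⟩
lemma head_cons_of_chain {l : List α} (hne : l ≠ []) (hc : List.IsChain (· ≤ ·) l) :
    ∃ hd, l.head? = some hd ∧ l = hd :: vstar l := by
  cases l with
  | nil => exact absurd rfl hne
  | cons a t => exact ⟨a, rfl, by rw [vstar_chain_cons hc]⟩
lemma iter_succ' (k : ℕ) (l : List α) : vstar (vstar^[k] l) = vstar^[k+1] l :=
  (Function.iterate_succ_apply' vstar k l).symm

lemma drop_lemma_aux : ∀ (n : ℕ) (W : List α), W.length ≤ n → ∀ e : ℕ, e + 1 ≤ W.length →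
    vstar^[e+1] W = W.drop (e+1) →
    List.IsChain (· ≤ ·) (vstar^[e] W) ∧
      ∃ hd g, (vstar^[e] W).head? = some hd ∧ W[e]? = some g ∧ g ≤ hd := by
  intro n
  induction n with
  | zero => intro W hW e h1 _; omega
  | succ n IH => ?_
  intro W hW e h1 h2
  classical
  match W with
  | [] => simp at h1
  | w :: W' =>
    have hW'n : W'.length ≤ n := by simpa using hW
    by_cases hc : List.IsChain (· ≤ ·) (w :: W')
    · have hv : vstar (w :: W') = W' := vstar_chain_cons hc
      match e with
      | 0 => exact ⟨hc, w, w, by simp, by simp, le_refl w⟩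
      | e' + 1 =>
        have key : vstar^[e'+1] W' = W'.drop (e'+1) := by
          have h3 : vstar^[e'+1+1] (w :: W') = vstar^[e'+1] W' := by
            rw [Function.iterate_succ_apply, hv]
          rw [← h3, h2]; rfl
        have hlen : e' + 1 ≤ W'.length := by simpa using h1
        obtain ⟨hch, hd, g, hhd, hg, hle⟩ := IH W' hW'n e' hlen key
        have heq : vstar^[e'+1] (w :: W') = vstar^[e'] W' := by
          rw [Function.iterate_succ_apply, hv]
        refine ⟨by rwa [heq], hd, g, by rwa [heq], ?_, hle⟩
        simpa using hg
    · have hW' : W' ≠ [] := by rintro rfl; exact hc (by simp)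
      by_cases hs : ∀ k ≤ e, vstar^[k] (w :: W') = w :: vstar^[k] W'
      · -- survival case
        have hVe : vstar^[e] (w :: W') = w :: vstar^[e] W' := hs e le_rfl
        have he_le : e ≤ W'.length := by simpa using h1
        have hCV : List.IsChain (· ≤ ·) (vstar^[e] (w :: W')) := by
          by_contra hv2
          rw [hVe] at hv2
          have hstep : vstar^[e+1] (w :: W') = w :: vstar^[e+1] W' := by
            rw [← iter_succ' e (w :: W'), hVe, vstar_not_chain hv2, iter_succ' e W']
          rw [h2] at hstep
          have hdrop : W'.drop e = w :: vstar^[e+1] W' := by rw [← hstep]; rfl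
          rcases Nat.lt_or_ge e W'.length with helt | hege
          · have hcons : W'.drop e = W'[e] :: W'.drop (e+1) := List.drop_eq_getElem_cons helt
            rw [hcons] at hdrop
            obtain ⟨hw, ht0⟩ := List.cons.inj hdrop
            have ht : vstar^[e+1] W' = W'.drop (e+1) := ht0.symm
            obtain ⟨hch, hd, g, hhd, hg, hle⟩ := IH W' hW'n e (by omega) ht
            have hgw : g = w := by
              rw [List.getElem?_eq_getElem helt, Option.some_inj] at hg
              exact hg ▸ hw
            apply hv2
            rw [List.isChain_cons]
            refine ⟨?_, hch⟩
            intro y hy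
            rw [hhd, Option.mem_some_iff] at hy
            subst hy
            calc w = g := hgw.symm
              _ ≤ hd := hle
          · have hnil : W'.drop e = [] := List.drop_eq_nil_of_le hege
            rw [hnil] at hdrop; exact List.cons_ne_nil _ _ hdrop.symm
        have hepos : e ≠ 0 := by
          rintro rfl
          exact hc hCV
        obtain ⟨e', rfl⟩ : ∃ e', e = e' + 1 := ⟨e - 1, by omega⟩
        have h3 : vstar^[e'+1+1] (w::W') = vstar^[e'+1] W' := by
          rw [← iter_succ' (e'+1) (w :: W'), vstar_chain hCV, hVe, List.tail_cons]
        have hDE : vstar^[e'+1] W' = W'.drop (e'+1) := by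
          rw [← h3, h2]; rfl
        obtain ⟨hch3, hd3, g3, hhd3, hg3, hle3⟩ := IH W' hW'n e' (by omega) hDE
        have hne3 : vstar^[e'] W' ≠ [] := by
          intro hnil
          have hl := length_vstar_iter e' W'
          rw [hnil] at hl
          simp only [List.length_nil] at hl
          omega
        obtain ⟨hd3', hh3', hcons3⟩ := head_cons_of_chain hne3 hch3
        rw [hhd3, Option.some_inj] at hh3'
        subst hh3'
        have hcons3' : vstar^[e'] W' = hd3 :: W'.drop (e'+1) := by
          rw [hcons3, iter_succ' e' W', hDE]
        have hstep2 : vstar^[e'+1] (w :: W') = vstar (w :: vstar^[e'] W') := by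
          rw [← iter_succ' e' (w :: W'), hs e' (by omega)]
        have hstep2' : vstar^[e'+1] (w :: W') = w :: W'.drop (e'+1) := by
          rw [hs (e'+1) le_rfl, hDE]
        have hgw : g3 ≤ w := by
          by_cases hcc : List.IsChain (· ≤ ·) (w :: vstar^[e'] W')
          · have h5 : vstar (w :: vstar^[e'] W') = vstar^[e'] W' := vstar_chain_cons hcc
            rw [h5, hcons3'] at hstep2
            rw [hstep2'] at hstep2
            obtain ⟨h6, -⟩ := List.cons.inj hstep2
            calc g3 ≤ hd3 := hle3
              _ = w := h6.symm
          · obtain ⟨hd4, hh4, hlt4⟩ := chain'_cons_not hcc hch3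
            rw [hhd3, Option.some_inj] at hh4
            subst hh4
            exact le_of_lt (lt_of_le_of_lt hle3 hlt4)
        refine ⟨hCV, w, g3, by rw [hVe]; rfl, ?_, hgw⟩
        simpa using hg3
      · -- non-survival
        push_neg at hs
        have hex : ∃ k, k ≤ e ∧ vstar^[k] (w :: W') ≠ w :: vstar^[k] W' := hs
        have hspec := Nat.find_spec hex
        have hmin := fun m (hm : m < Nat.find hex) => Nat.find_min hex hm
        obtain ⟨k0, hk0⟩ : ∃ k0, Nat.find hex = k0 := ⟨_, rfl⟩
        rw [hk0] at hspec hmin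
        obtain ⟨hk0e, hk0ne⟩ := hspec
        have hk0pos : 0 < k0 := by
          rcases Nat.eq_zero_or_pos k0 with h | h
          · exfalso; apply hk0ne; rw [h]; rfl
          · exact h
        obtain ⟨k1, rfl⟩ : ∃ k1, k0 = k1 + 1 := ⟨k0 - 1, by omega⟩
        have hE : vstar^[k1] (w :: W') = w :: vstar^[k1] W' := by
          have h7 := hmin k1 (by omega)
          push_neg at h7
          exact h7 (by omega)
        have hstep : vstar^[k1+1] (w :: W') = vstar (w :: vstar^[k1] W') := by
          rw [← iter_succ' k1 (w :: W'), hE]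
        have hcc : List.IsChain (· ≤ ·) (w :: vstar^[k1] W') := by
          by_contra hcc
          apply hk0ne
          rw [hstep, vstar_not_chain hcc, iter_succ' k1 W']
        have hk0' : vstar^[k1+1] (w :: W') = vstar^[k1] W' := by
          rw [hstep, vstar_chain_cons hcc]
        have hshift : ∀ j, k1 + 1 ≤ j → vstar^[j] (w :: W') = vstar^[j-1] W' := by
          intro j hj
          obtain ⟨i, rfl⟩ : ∃ i, j = i + (k1+1) := ⟨j - (k1+1), by omega⟩
          rw [Function.iterate_add_apply, hk0', ← Function.iterate_add_apply]
          have h10 : i + k1 = i + (k1+1) - 1 := by omega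
          rw [h10]
        obtain ⟨e', rfl⟩ : ∃ e', e = e' + 1 := ⟨e - 1, by omega⟩
        have hh2 : vstar^[e'+1] W' = W'.drop (e'+1) := by
          have h8 := hshift (e'+1+1) (by omega)
          rw [h2] at h8
          have h9 : e' + 1 + 1 - 1 = e' + 1 := by omega
          rw [h9] at h8
          rw [← h8]
          rfl
        obtain ⟨hch, hd, g, hhd, hg, hle⟩ := IH W' hW'n e' (by simp at h1; omega) hh2
        have hEe : vstar^[e'+1] (w :: W') = vstar^[e'] W' := by
          have := hshift (e'+1) (by omega)
          simpa using this
        refine ⟨by rwa [hEe], hd, g, by rwa [hEe], ?_, hle⟩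
        simpa using hg

/-- Structure of `vstar` on a non-chain list: it deletes an interior letter. -/
lemma vstar_decomp {S : List α} (hnc : ¬ List.IsChain (· ≤ ·) S) :
    ∃ P g R, S = P ++ g :: R ∧ P ≠ [] ∧ vstar S = P ++ R ∧
      ∀ l ∈ P.getLast?, g < l := by
  induction S with
  | nil => exact absurd (by simp) hnc
  | cons s S' IH =>
    by_cases hc' : List.IsChain (· ≤ ·) S'
    · have hS' : S' ≠ [] := by rintro rfl; exact hnc (by simp)
      obtain ⟨hd, hhd, hlt⟩ := chain'_cons_not hnc hc'
      obtain ⟨hd', hh', hcons⟩ := head_cons_of_chain hS' hc'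
      rw [hhd, Option.some_inj] at hh'
      subst hh'
      refine ⟨[s], hd, vstar S', ?_, by simp, ?_, ?_⟩
      · rw [← hcons]; rfl
      · rw [vstar_not_chain hnc]; rfl
      · intro l hl
        simp only [List.getLast?_singleton, Option.mem_some_iff] at hl
        subst hl; exact hlt
    · obtain ⟨P', g, R', hS, hP', hv, hlast⟩ := IH hc'
      refine ⟨s :: P', g, R', by rw [hS]; rfl, by simp, ?_, ?_⟩
      · rw [vstar_not_chain hnc, hv]; rfl
      · intro l hl
        apply hlast
        cases P' with
        | nil => exact absurd rfl hP'
        | cons p P'' => rwa [List.getLast?_cons_cons] at hl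

/-- One step of `vstar` on `b ++ Z` with `b ≠ []`: either it deletes inside `b`
(with the last entry of `b` not decreasing), or it acts as `vstar` on `Z`. -/
lemma vstar_step (b Z : List α) (hb : b ≠ []) :
    (∃ b', b.length = b'.length + 1 ∧ vstar (b ++ Z) = b' ++ Z ∧
      ∀ l l', b.getLast? = some l → b'.getLast? = some l' → l ≤ l')
    ∨ (Z ≠ [] ∧ vstar (b ++ Z) = b ++ vstar Z ∧
      (List.IsChain (· ≤ ·) Z → ∀ hd ∈ Z.head?, ∀ l ∈ b.getLast?, hd < l)) := by
  induction b with
  | nil => exact absurd rfl hb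
  | cons x b'' IH =>
    by_cases hc : List.IsChain (· ≤ ·) (x :: (b'' ++ Z))
    · -- head deleted
      cases b'' with
      | nil =>
        left
        refine ⟨[], by simp, ?_, by simp⟩
        have : vstar (x :: Z) = Z := vstar_chain_cons (by simpa using hc)
        simpa using this
      | cons u b₃ =>
        left
        refine ⟨u :: b₃, by simp, ?_, ?_⟩
        · have : vstar ((x :: u :: b₃) ++ Z) = (u :: b₃) ++ Z := by
            have := vstar_chain_cons (a := x) (t := (u :: b₃) ++ Z) (by simpa using hc)
            simpa using this
          exact this
        · intro l l' h1 h2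
          rw [List.getLast?_cons_cons] at h1
          rw [h1] at h2
          exact le_of_eq (Option.some_inj.mp h2)
    · have hb2 : vstar ((x :: b'') ++ Z) = x :: vstar (b'' ++ Z) := by
        have := vstar_not_chain (a := x) (t := b'' ++ Z) (by simpa using hc)
        simpa using this
      cases b'' with
      | nil =>
        -- b = [x], deletion can't be of x (not chain), so inside Z
        right
        simp only [List.nil_append] at hb2 hc
        have hZ : Z ≠ [] := by rintro rfl; exact hc (by simp)
        by_cases hcz : List.IsChain (· ≤ ·) Z
        · -- then x > Z.head, and vstar Z = Z.tail; need vstar (x :: Z) = x :: vstar Z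
          refine ⟨hZ, by rw [hb2]; rfl, ?_⟩
          intro _ hd hhd l hl
          simp only [List.getLast?_singleton, Option.mem_some_iff] at hl
          subst hl
          obtain ⟨hd', hh', hlt⟩ := chain'_cons_not hc hcz
          rw [Option.mem_def, hh', Option.some_inj] at hhd
          subst hhd
          exact hlt
        · refine ⟨hZ, by rw [hb2]; rfl, fun h => absurd h hcz⟩
      | cons u b₃ =>
        rcases IH (by simp) with ⟨b', hlen, heq, hmono⟩ | ⟨hZ, heq, hcond⟩
        · left
          cases b' with
          | nil =>
            -- u :: b₃ has length 1, i.e. b₃ = [], and vstar ([u] ++ Z) = Z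
            have hb₃ : b₃ = [] := by simpa using hlen
            subst hb₃
            refine ⟨[x], by simp, ?_, ?_⟩
            · rw [hb2, heq]; rfl
            · -- need: getLast (x :: [u]) = u ≤ x
              intro l l' h1 h2
              simp only [List.getLast?_cons_cons, List.getLast?_singleton,
                Option.some_inj] at h1 h2
              subst h1; subst h2
              -- u ≤ x : since vstar ([u] ++ Z) = Z
              by_cases hcu : List.IsChain (· ≤ ·) (u :: Z)
              · -- then ¬Chain' (x :: u :: Z) would give x > u; here derive u ≤ x
                by_contra hxu
                push_neg at hxu
                apply hc
                rw [List.isChain_cons]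
                refine ⟨?_, by simpa using hcu⟩
                intro y hy
                simp only [List.singleton_append, List.head?_cons,
                  Option.mem_some_iff] at hy
                subst hy
                exact le_of_lt hxu
              · -- vstar (u :: Z) = u :: vstar Z = Z :  impossible via drop_lemma
                exfalso
                simp only [List.singleton_append, List.nil_append] at heq
                rw [vstar_not_chain hcu] at heq
                -- heq : u :: vstar Z = Z
                have hZne : Z ≠ [] := by rintro rfl; simp at heq
                have hdz : vstar^[0+1] Z = Z.drop (0+1) := by
                  cases Z with
                  | nil => exact absurd rfl hZne
                  | cons z0 Z0 =>
                    obtain ⟨h3, h4⟩ := List.cons.inj heq.symm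
                    simpa using h4.symm
                obtain ⟨hch, -⟩ := drop_lemma_aux Z.length Z le_rfl 0
                  (by have := List.length_pos_iff.mpr hZne; omega) hdz
                -- hch : Chain' Z ; then Chain' (u :: Z) iff u ≤ Z.head = u
                apply hcu
                rw [List.isChain_cons]
                refine ⟨?_, hch⟩
                intro y hy
                cases Z with
                | nil => exact absurd rfl hZne
                | cons z0 Z0 =>
                  obtain ⟨h3, -⟩ := List.cons.inj heq.symm
                  simp only [List.head?_cons, Option.mem_some_iff] at hy
                  subst hy
                  exact le_of_eq h3.symm
          | cons v b₄ =>
            refine ⟨x :: v :: b₄, by simpa using hlen, ?_, ?_⟩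
            · rw [hb2, heq]; rfl
            · intro l l' h1 h2
              rw [List.getLast?_cons_cons] at h1 h2
              exact hmono l l' h1 h2
        · right
          refine ⟨hZ, ?_, ?_⟩
          · rw [hb2, heq]; rfl
          · intro hch hd hhd l hl
            rw [List.getLast?_cons_cons] at hl
            exact hcond hch hd hhd l hl

/-- The main trace dichotomy for the star path of `b ++ Z` (`b ≠ []`). -/
lemma trace_lemma : ∀ (N : ℕ) (b Z : List α), b.length + Z.length ≤ N → b ≠ [] →
    (∀ k ≤ b.length, ∃ b', vstar^[k] (b ++ Z) = b' ++ Z ∧ k + b'.length = b.length ∧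
       ∀ l l', b.getLast? = some l → b'.getLast? = some l' → l ≤ l')
    ∨ (∃ m₀ κ₀ c, m₀ + 1 ≤ Z.length ∧ κ₀ = b.length + m₀ ∧
        vstar^[κ₀+1] (b ++ Z) = vstar^[m₀+1] Z ∧
        vstar^[κ₀] (b ++ Z) = c :: vstar^[m₀+1] Z ∧
        (List.IsChain (· ≤ ·) (vstar^[m₀] Z) → ∀ hd ∈ (vstar^[m₀] Z).head?, hd < c) ∧
        (∀ k ≤ κ₀, ∃ b' m', b' ≠ [] ∧ m' ≤ m₀ + 1 ∧ m' ≤ k ∧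
           k + b'.length = b.length + m' ∧ vstar^[k] (b ++ Z) = b' ++ vstar^[m'] Z ∧
           (∀ i, m' = i + 1 → List.IsChain (· ≤ ·) (vstar^[i] Z) →
              ∀ hd ∈ (vstar^[i] Z).head?, ∀ l ∈ b'.getLast?, hd < l) ∧
           (m' = 0 → ∀ l l', b.getLast? = some l → b'.getLast? = some l' → l ≤ l'))) := by
  intro N
  induction N with
  | zero =>
    intro b Z hN hb
    have := List.length_pos_iff.mpr hb
    omega
  | succ N IH => ?_
  intro b Z hN hb
  rcases vstar_step b Z hb with ⟨b₁, hlen1, heq1, hmono1⟩ | ⟨hZ, heq1, hcond1⟩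
  · -- deletion inside b
    cases b₁ with
    | nil =>
      -- b was a singleton
      left
      intro k hk
      have hb1 : b.length = 1 := by simpa using hlen1
      rw [hb1] at hk
      interval_cases k
      · exact ⟨b, rfl, by omega, fun l l' h1 h2 => le_of_eq (by rw [h1] at h2; exact Option.some_inj.mp h2)⟩
      · refine ⟨[], ?_, by omega, by simp⟩
        rw [Function.iterate_one, heq1]
    | cons u b₂ =>
      have hb₁ : (u :: b₂) ≠ [] := by simp
      have hN1 : (u :: b₂).length + Z.length ≤ N := by
        have : b.length = (u :: b₂).length + 1 := hlen1
        omega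
      rcases IH (u :: b₂) Z hN1 hb₁ with HL | ⟨m₀, κ₀, c, hm, hκ, E1, E2, E3, E4⟩
      · -- all-left
        left
        intro k hk
        match k, hk with
        | 0, _ => exact ⟨b, rfl, by omega, fun l l' h1 h2 => le_of_eq (by rw [h1] at h2; exact Option.some_inj.mp h2)⟩
        | (s+1), hk =>
          obtain ⟨b', hP1, hP2, hP3⟩ := HL s (by omega)
          refine ⟨b', ?_, by omega, ?_⟩
          · rw [Function.iterate_succ_apply, heq1, hP1]
          · intro l l' h1 h2
            obtain ⟨lu, hlu⟩ : ∃ lu, (u :: b₂).getLast? = some lu :=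
              ⟨(u :: b₂).getLast (by simp), List.getLast?_eq_getLast _⟩
            exact le_trans (hmono1 l lu h1 hlu) (hP3 lu l' hlu h2)
      · -- right from b₁
        right
        refine ⟨m₀, κ₀ + 1, c, hm, by rw [hκ, hlen1]; omega, ?_, ?_, E3, ?_⟩
        · rw [Function.iterate_succ_apply, heq1]; exact E1
        · rw [Function.iterate_succ_apply, heq1]; exact E2
        · intro k hk
          match k, hk with
          | 0, _ =>
            refine ⟨b, 0, hb, by omega, by omega, by omega, rfl,
              fun i hi => absurd hi (by omega), ?_⟩
            intro _ l l' h1 h2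
            exact le_of_eq (by rw [h1] at h2; exact Option.some_inj.mp h2)
          | (s+1), hk =>
            obtain ⟨b', m', hQ0, hQ1, hQ2, hQ3, hQ4, hQ5, hQ6⟩ := E4 s (by omega)
            refine ⟨b', m', hQ0, hQ1, by omega, by rw [hlen1]; omega, ?_, hQ5, ?_⟩
            · rw [Function.iterate_succ_apply, heq1, hQ4]
            · intro hm0 l l' h1 h2
              obtain ⟨lu, hlu⟩ : ∃ lu, (u :: b₂).getLast? = some lu :=
                ⟨(u :: b₂).getLast (by simp), List.getLast?_eq_getLast _⟩
              exact le_trans (hmono1 l lu h1 hlu) (hQ6 hm0 lu l' hlu h2)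
  · -- deletion inside Z
    right
    have hNz : b.length + (vstar Z).length ≤ N := by
      have := length_vstar Z
      have := List.length_pos_iff.mpr hZ
      omega
    rcases IH b (vstar Z) hNz hb with HL | ⟨m₀', κ₀', c, hm', hκ', E1', E2', E3', E4'⟩
    · -- m₀ = 0 case
      obtain ⟨L, hL⟩ : ∃ L, b.length = L + 1 :=
        ⟨b.length - 1, by have := List.length_pos_iff.mpr hb; omega⟩
      obtain ⟨bc, hbc1, hbc2, hbc3⟩ := HL L (by omega)
      have hbcl : bc.length = 1 := by omega
      obtain ⟨c, hc⟩ : ∃ c, bc = [c] := by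
        cases bc with
        | nil => simp at hbcl
        | cons c t =>
          have ht : t = [] := List.length_eq_zero_iff.mp (by simpa using hbcl)
          exact ⟨c, by rw [ht]⟩
      obtain ⟨bl, hbl⟩ : ∃ bl, b.getLast? = some bl :=
        ⟨b.getLast hb, List.getLast?_eq_getLast _⟩
      have hblc : bl ≤ c := hbc3 bl c hbl (by rw [hc]; rfl)
      obtain ⟨bz, hbz1, hbz2, hbz3⟩ := HL b.length le_rfl
      have hbz0 : bz = [] := by
        have hbzl : bz.length = 0 := by omega
        exact List.length_eq_zero_iff.mp hbzl
      rw [hbz0] at hbz1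
      refine ⟨0, b.length, c, by have := List.length_pos_iff.mpr hZ; omega, by omega, ?_, ?_, ?_, ?_⟩
      · rw [hL, Function.iterate_succ_apply, heq1]
        rw [hL] at hbz1
        simpa using hbz1
      · rw [hL, Function.iterate_succ_apply, heq1, hbc1, hc]
        simp
      · intro hch hd hhd
        exact lt_of_lt_of_le (hcond1 hch hd hhd bl hbl) hblc
      · intro k hk
        match k, hk with
        | 0, _ =>
          refine ⟨b, 0, hb, by omega, by omega, by omega, rfl,
            fun i hi => absurd hi (by omega), ?_⟩
          intro _ l l' h1 h2
          exact le_of_eq (by rw [h1] at h2; exact Option.some_inj.mp h2)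
        | (s+1), hk =>
          obtain ⟨b', hR1, hR2, hR3⟩ := HL s (by omega)
          have hb'ne : b' ≠ [] := by
            intro h
            rw [h] at hR2
            simp at hR2
            omega
          refine ⟨b', 1, hb'ne, by omega, by omega, by omega, ?_, ?_, by omega⟩
          · rw [Function.iterate_succ_apply, heq1, hR1]
            rfl
          · intro i hi hch hd hhd l hl
            have hi0 : i = 0 := by omega
            subst hi0
            obtain ⟨bl', hbl'⟩ : ∃ bl', b'.getLast? = some bl' :=
              ⟨b'.getLast hb'ne, List.getLast?_eq_getLast _⟩
            rw [hbl', Option.mem_some_iff] at hl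
            have h5 : hd < bl' := lt_of_lt_of_le (hcond1 hch hd hhd bl hbl) (hR3 bl bl' hbl hbl')
            first
            | (rw [hl]; exact h5)
            | (rw [← hl]; exact h5)
            | exact h5
    · -- m₀ = m₀' + 1
      have hIt : ∀ (j : ℕ) (L : List α), vstar^[j] (vstar L) = vstar^[j+1] L :=
        fun j L => (Function.iterate_succ_apply vstar j L).symm
      refine ⟨m₀' + 1, κ₀' + 1, c, ?_, ?_, ?_, ?_, ?_, ?_⟩
      · have := length_vstar Z
        have := List.length_pos_iff.mpr hZ
        omega
      · omega
      · rw [Function.iterate_succ_apply, heq1, E1', hIt]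
      · rw [Function.iterate_succ_apply, heq1, E2', hIt]
      · rw [Function.iterate_succ_apply]
        exact E3'
      · intro k hk
        match k, hk with
        | 0, _ =>
          refine ⟨b, 0, hb, by omega, by omega, by omega, rfl,
            fun i hi => absurd hi (by omega), ?_⟩
          intro _ l l' h1 h2
          exact le_of_eq (by rw [h1] at h2; exact Option.some_inj.mp h2)
        | (s+1), hk =>
          obtain ⟨b', m'', hQ0, hQ1, hQ2, hQ3, hQ4, hQ5, hQ6⟩ := E4' s (by omega)
          refine ⟨b', m'' + 1, hQ0, by omega, by omega, by omega, ?_, ?_, by omega⟩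
          · rw [Function.iterate_succ_apply, heq1, hQ4, hIt]
          · intro i hi hch hd hhd l hl
            have hi2 : i = m'' := by omega
            rw [hi2] at hch hhd
            rcases Nat.eq_zero_or_pos m'' with rfl | hip
            · obtain ⟨bl, hbl⟩ : ∃ bl, b.getLast? = some bl :=
                ⟨b.getLast hb, List.getLast?_eq_getLast _⟩
              obtain ⟨bl', hbl'⟩ : ∃ bl', b'.getLast? = some bl' :=
                ⟨b'.getLast hQ0, List.getLast?_eq_getLast _⟩
              rw [hbl', Option.mem_some_iff] at hl
              have h5 : hd < bl' :=
                lt_of_lt_of_le (hcond1 hch hd hhd bl hbl) (hQ6 rfl bl bl' hbl hbl')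
              first
              | (rw [hl]; exact h5)
              | (rw [← hl]; exact h5)
              | exact h5
            · obtain ⟨i', rfl⟩ : ∃ i', m'' = i' + 1 := ⟨m'' - 1, by omega⟩
              have hrw : vstar^[i'+1] Z = vstar^[i'] (vstar Z) :=
                Function.iterate_succ_apply vstar i' Z
              rw [hrw] at hch hhd
              exact hQ5 i' rfl hch hd hhd l hl

theorem vless_of_proper_suffix (z y : List α) (hsuf : z <:+ y) (hne : z ≠ y) :
    VLess z y := by
  obtain ⟨a, rfl⟩ := hsuf
  have ha : a ≠ [] := by rintro rfl; simp at hne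
  have hapos : 0 < a.length := List.length_pos_iff.mpr ha
  by_cases H : ∃ k, vstar^[k] (a ++ z) = z
  · obtain ⟨k, hk⟩ := H
    left
    refine ⟨k, ?_, hk⟩
    rcases Nat.eq_zero_or_pos k with rfl | h
    · exfalso
      have := congrArg List.length hk
      simp only [Function.iterate_zero, id_eq, List.length_append] at this
      omega
    · exact h
  · right
    refine ⟨H, ?_, ?_⟩
    · rintro ⟨k, hk⟩
      have hlk := length_vstar_iter k z
      rw [hk] at hlk
      simp only [List.length_append] at hlk
      omega
    rcases trace_lemma (a.length + z.length) a z (by simp) ha with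
      HL | ⟨m₀, κ₀, c, hm, hκ, E1, E2, E3, E4⟩
    · exfalso
      obtain ⟨b', h1, h2, h3⟩ := HL a.length le_rfl
      have hb'0 : b' = [] := List.length_eq_zero_iff.mp (by omega)
      rw [hb'0] at h1
      exact H ⟨a.length, by simpa using h1⟩
    · have hminS : ∀ s' t' : ℕ, vstar^[s' + 1] z = vstar^[t' + 1] (a ++ z) → m₀ ≤ s' := by
        intro s' t' h'
        by_contra hs'
        push_neg at hs'
        have hs1 : s' + 1 < z.length := by omega
        rcases le_or_gt (t'+1) κ₀ with ht | ht
        · obtain ⟨b', m', hQ0, hQ1, hQ2, hQ3, hQ4, hQ5, hQ6⟩ := E4 (t'+1) ht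
          rw [hQ4] at h'
          have hlb' : 0 < b'.length := List.length_pos_iff.mpr hQ0
          have hlen := congrArg List.length h'
          rw [List.length_append, length_vstar_iter, length_vstar_iter] at hlen
          have hm'z : m' ≤ z.length := by omega
          have hm'eq : m' = s' + 1 + b'.length := by omega
          obtain ⟨q, hq⟩ : ∃ q, b'.length = q + 1 := ⟨b'.length - 1, by omega⟩
          have hWl : q + 1 ≤ (vstar^[s'+1] z).length := by
            rw [length_vstar_iter]; omega
          have hWd : vstar^[q+1] (vstar^[s'+1] z) = (vstar^[s'+1] z).drop (q+1) := by
            rw [← Function.iterate_add_apply]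
            have h6 : q + 1 + (s'+1) = m' := by omega
            rw [h6, h', ← hq, List.drop_left]
          obtain ⟨hch, hd, g, hhd, hg, hle⟩ :=
            drop_lemma_aux (vstar^[s'+1] z).length _ le_rfl q hWl hWd
          have h7 : vstar^[q] (vstar^[s'+1] z) = vstar^[s'+1+q] z := by
            rw [← Function.iterate_add_apply]
            congr 1
            omega
          have hgl : b'.getLast? = some g := by
            rw [h'] at hg
            rw [List.getElem?_append_left (by omega : q < b'.length)] at hg
            rw [List.getLast?_eq_getElem?, hq]
            simpa using hg
          have hm'2 : m' = (s'+1+q) + 1 := by omega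
          have hch2 : List.IsChain (· ≤ ·) (vstar^[s'+1+q] z) := by rw [← h7]; exact hch
          have hhd2 : hd ∈ (vstar^[s'+1+q] z).head? := by
            rw [← h7, hhd]; rfl
          have hcon := hQ5 (s'+1+q) hm'2 hch2 hd hhd2 g hgl
          exact absurd hle (not_le.mpr hcon)
        · obtain ⟨d, hd⟩ : ∃ d, t' + 1 = d + (κ₀ + 1) := ⟨t' - κ₀, by omega⟩
          have h10 : vstar^[d + (κ₀+1)] (a++z) = vstar^[d] (vstar^[κ₀+1] (a++z)) :=
            Function.iterate_add_apply _ _ _ _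
          rw [hd, h10, E1, ← Function.iterate_add_apply] at h'
          have hlen := congrArg List.length h'
          rw [length_vstar_iter, length_vstar_iter] at hlen
          omega
      refine ⟨m₀, κ₀, E1.symm, ?_, ?_⟩
      · intro s' t' h'
        have hs'le : m₀ ≤ s' := hminS s' t' h'
        refine ⟨hs'le, ?_⟩
        by_contra htc
        push_neg at htc
        obtain ⟨b', m', hQ0, hQ1, hQ2, hQ3, hQ4, hQ5, hQ6⟩ := E4 (t'+1) (by omega)
        rw [hQ4] at h'
        by_cases hnil : vstar^[s'+1] z = []
        · rw [hnil] at h'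
          exact hQ0 (List.append_eq_nil_iff.mp h'.symm).1
        · have hzpos : s' + 1 < z.length := by
            have h9 := length_vstar_iter (s'+1) z
            have := List.length_pos_iff.mpr hnil
            omega
          have hb'pos := List.length_pos_iff.mpr hQ0
          have hlen := congrArg List.length h'
          rw [List.length_append, length_vstar_iter, length_vstar_iter] at hlen
          omega
      · -- the letter comparison at the last difference
        have hSlen : (vstar^[m₀] z).length = z.length - m₀ := length_vstar_iter _ _
        have hSne : vstar^[m₀] z ≠ [] := by
          intro h
          rw [h] at hSlen
          simp only [List.length_nil] at hSlen
          omega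
        by_cases hch : List.IsChain (· ≤ ·) (vstar^[m₀] z)
        · obtain ⟨hd, hhd, hcons⟩ := head_cons_of_chain hSne hch
          refine ⟨0, List.length_pos_iff.mpr hSne, ?_, hd, c, ?_, ?_, ?_⟩
          · intro j' hj'
            obtain ⟨i, rfl⟩ : ∃ i, j' = i + 1 := ⟨j'-1, by omega⟩
            rw [E2, List.getElem?_cons_succ]
            conv_lhs => rw [hcons, iter_succ']
            rw [List.getElem?_cons_succ]
          · rw [hcons]; simp
          · rw [E2]; simp
          · exact E3 hch hd (by rw [hhd]; rfl)
        · obtain ⟨P, g, R, hS, hP, hv, hlast⟩ := vstar_decomp hch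
          have hPq : ∃ q, P.length = q + 1 :=
            ⟨P.length - 1, by have := List.length_pos_iff.mpr hP; omega⟩
          obtain ⟨q, hq⟩ := hPq
          have hvS : vstar^[m₀+1] z = P ++ R := by rw [← iter_succ', hv]
          refine ⟨P.length, ?_, ?_, g, P.getLast hP, ?_, ?_, ?_⟩
          · rw [hS, List.length_append, List.length_cons]
            omega
          · intro j' hj'
            obtain ⟨i, rfl⟩ : ∃ i, j' = P.length + 1 + i := ⟨j' - P.length - 1, by omega⟩
            rw [hS, E2, hvS]
            rw [List.getElem?_append_right (by omega : P.length ≤ P.length + 1 + i)]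
            have hidx : P.length + 1 + i - P.length = i + 1 := by omega
            rw [hidx, List.getElem?_cons_succ]
            obtain ⟨i2, hi2⟩ : ∃ i2, P.length + 1 + i = i2 + 1 := ⟨P.length + i, by omega⟩
            rw [hi2, List.getElem?_cons_succ]
            rw [List.getElem?_append_right (by omega : P.length ≤ i2)]
            have hidx2 : i2 - P.length = i := by omega
            rw [hidx2]
          · rw [hS, List.getElem?_append_right (le_refl P.length)]
            simp
          · rw [E2, hvS]
            obtain ⟨i2, hi2⟩ : ∃ i2, P.length = i2 + 1 := ⟨q, hq⟩
            rw [hi2, List.getElem?_cons_succ]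
            rw [List.getElem?_append_left (by omega : i2 < P.length)]
            rw [List.getElem?_eq_getElem (by omega : i2 < P.length)]
            congr 1
            rw [List.getLast_eq_getElem]
            congr 1
            omega
          · exact hlast (P.getLast hP) (by rw [List.getLast?_eq_getLast hP]; rfl)


/-- Compatibility of suffix sorting (Lemma 7): let `x = p·u·r` with `u` a
substring of `x`, let `s₁` be a nonempty suffix of `u` and `s₂` a proper
suffix of `s₁`. Then `s₂ ≺ s₁` (their order with respect to `u`) and
`s₂r ≺ s₁r` (the corresponding suffixes of `x` compare the same way). -/
theorem vless_suffix_compatible {α : Type*} [LinearOrder α]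
    (x p u r : List α) (hx : x = p ++ u ++ r)
    (s₁ s₂ : List α) (hs₁ : s₁ <:+ u) (hs₁ne : s₁ ≠ [])
    (hs₂ : s₂ <:+ s₁) (hs₂ne : s₂ ≠ s₁) :
    VLess s₂ s₁ ∧ VLess (s₂ ++ r) (s₁ ++ r) := by

  obtain ⟨a, rfl⟩ := hs₂
  have ha : a ≠ [] := by rintro rfl; simp at hs₂ne
  have hapos : 0 < a.length := List.length_pos_iff.mpr ha
  constructor
  · exact vless_of_proper_suffix _ _ ⟨a, rfl⟩ hs₂ne
  · apply vless_of_proper_suffix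
    · exact ⟨a, by rw [List.append_assoc]⟩
    · intro h
      have := congrArg List.length h
      simp only [List.length_append] at this
      omega
end
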